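/- Let T be a tree satisfying Σ_{uv ∈ E(T)}(d_u + d_v) = 4|E(T)|. Then for every s ≥ 1 the s-th subdivision tree T_s has assortativity coefficient r = 0 (equivalently, 4|E_s| · Σ_{ij ∈ E_s} d_i d_j = (Σ_{ij ∈ E_s}(d_i + d_j))²). -/

import Mathlib

open Finset

attribute [local instance] Classical.propDecidable

namespace Neutral

/-- Number of edges of `G`. -/
noncomputable def m {V : Type*} [Fintype V] (G : SimpleGraph V) : ℕ :=
  G.edgeFinset.card

/-- `∑_{uv ∈ E} d_u · d_v`, each edge counted once. -/
noncomputable def dd {V : Type*} [Fintype V] (G : SimpleGraph V) : ℕ :=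
  ∑ e ∈ G.edgeFinset,
    Sym2.lift ⟨fun u v => G.degree u * G.degree v, fun _ _ => Nat.mul_comm _ _⟩ e

/-- `∑_{uv ∈ E} (d_u + d_v)`, each edge counted once. -/
noncomputable def ds {V : Type*} [Fintype V] (G : SimpleGraph V) : ℕ :=
  ∑ e ∈ G.edgeFinset,
    Sym2.lift ⟨fun u v => G.degree u + G.degree v, fun _ _ => Nat.add_comm _ _⟩ e

/-- `∑_{uv ∈ E} (d_u² + d_v²)`, each edge counted once. -/
noncomputable def dsq {V : Type*} [Fintype V] (G : SimpleGraph V) : ℕ :=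
  ∑ e ∈ G.edgeFinset,
    Sym2.lift ⟨fun u v => G.degree u ^ 2 + G.degree v ^ 2, fun _ _ => Nat.add_comm _ _⟩ e

/-- A graph is irregular if it is not regular of any degree. -/
def Irregular {V : Type*} [Fintype V] (G : SimpleGraph V) : Prop :=
  ¬ ∃ k, G.IsRegularOfDegree k

end Neutral

open Neutral

namespace Neutral

/-- A chosen pair of endpoints of an unordered edge. -/
noncomputable def ends {V : Type*} (e : Sym2 V) : V × V :=
  Classical.choose (Quot.exists_rep e)

/-- One-directional adjacency used to build the `s`-th subdivision graph:
the new vertices `(e,0), …, (e,s-1)` inserted on the edge `e` form a path joining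
the two endpoints of `e`. -/
def subS {V : Type*} (G : SimpleGraph V) (s : ℕ) :
    (V ⊕ (G.edgeSet × Fin s)) → (V ⊕ (G.edgeSet × Fin s)) → Prop
  | Sum.inl u, Sum.inr (e, i) =>
      (i.val = 0 ∧ u = (ends (e : Sym2 V)).1) ∨ (i.val = s - 1 ∧ u = (ends (e : Sym2 V)).2)
  | Sum.inr (e, i), Sum.inr (f, j) => e = f ∧ i.val + 1 = j.val
  | _, _ => False

/-- The `s`-th subdivision graph `G_s`: every edge of `G` is subdivided by `s` new
vertices. -/
noncomputable def Subdiv {V : Type*} (G : SimpleGraph V) (s : ℕ) :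
    SimpleGraph (V ⊕ (G.edgeSet × Fin s)) where
  Adj x y := x ≠ y ∧ (subS G s x y ∨ subS G s y x)
  symm := ⟨fun _ _ h => ⟨Ne.symm h.1, h.2.symm⟩⟩
  loopless := ⟨fun _ h => h.1 rfl⟩

end Neutral

namespace Neutral
open Sum

lemma ends_spec {V : Type*} (e : Sym2 V) : s((ends e).1, (ends e).2) = e :=
  Classical.choose_spec (Quot.exists_rep e)

section
variable {V : Type*} [Fintype V] {G : SimpleGraph V} {t : ℕ}

omit [Fintype V] in
lemma adj_ends (e : G.edgeSet) : G.Adj (ends e.1).1 (ends e.1).2 := by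
  have h : s((ends e.1).1, (ends e.1).2) ∈ G.edgeSet := by rw [ends_spec]; exact e.2
  exact (SimpleGraph.mem_edgeSet G).mp h

omit [Fintype V] in
lemma ends_ne (e : G.edgeSet) : (ends e.1).1 ≠ (ends e.1).2 := (adj_ends e).ne

omit [Fintype V] in
lemma adj_inl_inl (u v : V) : ¬ (Subdiv G (t+1)).Adj (inl u) (inl v) := by
  rintro ⟨-, h | h⟩ <;> exact h

omit [Fintype V] in
lemma adj_inl_inr (u : V) (e : G.edgeSet) (i : Fin (t+1)) :
    (Subdiv G (t+1)).Adj (inl u) (inr (e, i)) ↔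
      (i.val = 0 ∧ u = (ends e.1).1) ∨ (i.val = t ∧ u = (ends e.1).2) := by
  show (_ ≠ _ ∧ (subS G (t+1) _ _ ∨ subS G (t+1) _ _)) ↔ _
  simp [subS]

omit [Fintype V] in
lemma adj_inr_inr (e f : G.edgeSet) (i j : Fin (t+1)) :
    (Subdiv G (t+1)).Adj (inr (e, i)) (inr (f, j)) ↔
      e = f ∧ (i.val + 1 = j.val ∨ j.val + 1 = i.val) := by
  constructor
  · rintro ⟨-, h | h⟩
    · exact ⟨h.1, Or.inl h.2⟩
    · exact ⟨h.1.symm, Or.inr h.2⟩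
  · rintro ⟨rfl, h | h⟩
    · refine ⟨?_, Or.inl ⟨rfl, h⟩⟩
      simp only [ne_eq, inr.injEq, Prod.mk.injEq, true_and]
      intro hij
      rw [hij] at h; omega
    · refine ⟨?_, Or.inr ⟨rfl, h⟩⟩
      simp only [ne_eq, inr.injEq, Prod.mk.injEq, true_and]
      intro hij
      rw [hij] at h; omega


lemma deg_inl (u : V) : (Subdiv G (t+1)).degree (inl u) = G.degree u := by
  rw [SimpleGraph.degree, SimpleGraph.degree]
  symm
  refine Finset.card_bij
    (fun v hv => (inr (⟨s(u, v),
        (G.mem_edgeSet).mpr (by simpa using hv)⟩,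
        if (ends (s(u, v))).1 = u then (0 : Fin (t+1)) else (Fin.last t)) :
        V ⊕ (G.edgeSet × Fin (t+1)))) ?_ ?_ ?_
  · intro v hv
    rw [SimpleGraph.mem_neighborFinset] at hv ⊢
    rw [adj_inl_inr]
    have hm : s((ends (s(u, v))).1, (ends (s(u, v))).2) = s((u, v).1, (u, v).2) := ends_spec _
    rw [Sym2.mk_eq_mk_iff] at hm
    rcases hm with hm | hm
    · have h1 : (ends (s(u, v))).1 = u := by rw [hm]
      rw [if_pos h1]
      exact Or.inl ⟨rfl, h1.symm⟩
    · have h2 : (ends (s(u, v))).2 = u := by rw [hm]; rfl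
      have h1 : (ends (s(u, v))).1 = v := by rw [hm]; rfl
      by_cases hc : (ends (s(u, v))).1 = u
      · rw [if_pos hc]
        exact Or.inl ⟨rfl, hc.symm⟩
      · rw [if_neg hc]
        exact Or.inr ⟨rfl, h2.symm⟩
  · intro v1 h1 v2 h2 heq
    simp only [inr.injEq, Prod.mk.injEq, Subtype.mk.injEq] at heq
    exact (Sym2.congr_right.mp heq.1)
  · intro y hy
    rw [SimpleGraph.mem_neighborFinset] at hy
    cases y with
    | inl w => exact absurd hy (adj_inl_inl u w)
    | inr p =>
      obtain ⟨e, i⟩ := p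
      rw [adj_inl_inr] at hy
      have hp : s((ends e.1).1, (ends e.1).2) = e.1 := ends_spec _
      rcases hy with ⟨hi, hu⟩ | ⟨hi, hu⟩
      · refine ⟨(ends e.1).2, ?_, ?_⟩
        · rw [SimpleGraph.mem_neighborFinset]
          exact hu ▸ adj_ends e
        · have he : s(u, (ends e.1).2) = e.1 := by
            rw [hu]; exact hp
          simp only [inr.injEq, Prod.mk.injEq]
          constructor
          · exact Subtype.ext he
          · rw [show (ends (s(u, (ends e.1).2))).1 = (ends e.1).1 by rw [he]]
            rw [if_pos hu.symm]
            exact (Fin.ext hi.symm : (0 : Fin (t+1)) = i)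
      · refine ⟨(ends e.1).1, ?_, ?_⟩
        · rw [SimpleGraph.mem_neighborFinset]
          exact hu ▸ (adj_ends e).symm
        · have he : s(u, (ends e.1).1) = e.1 := by
            rw [hu, Sym2.eq_swap]; exact hp
          simp only [inr.injEq, Prod.mk.injEq]
          constructor
          · exact Subtype.ext he
          · rw [show (ends (s(u, (ends e.1).1))).1 = (ends e.1).1 by rw [he]]
            rw [if_neg (by rw [hu]; exact fun hc => (ends_ne e) hc)]
            exact (Fin.ext (by simp [Fin.last]; omega) : Fin.last t = i)

lemma deg_two_of {W : Type*} [Fintype W] (H : SimpleGraph W) (w x y : W) (hxy : x ≠ y)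
    (hx : H.Adj w x) (hy : H.Adj w y) (hmax : ∀ z, H.Adj w z → z = x ∨ z = y) :
    H.degree w = 2 := by
  rw [SimpleGraph.degree]
  have : H.neighborFinset w = {x, y} := by
    ext z
    rw [SimpleGraph.mem_neighborFinset, Finset.mem_insert, Finset.mem_singleton]
    constructor
    · exact hmax z
    · rintro (rfl | rfl) <;> assumption
  rw [this, Finset.card_pair hxy]

lemma deg_inr (e : G.edgeSet) (i : Fin (t+1)) :
    (Subdiv G (t+1)).degree (inr (e, i)) = 2 := by
  by_cases h0 : i.val = 0 <;> by_cases ht : i.val = t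
  · -- i = 0 = t
    refine deg_two_of _ _ (inl (ends e.1).1) (inl (ends e.1).2)
      (fun hc => ends_ne e (inl.inj hc)) ?_ ?_ ?_
    · exact ((adj_inl_inr _ e i).mpr (Or.inl ⟨h0, rfl⟩)).symm
    · exact ((adj_inl_inr _ e i).mpr (Or.inr ⟨ht, rfl⟩)).symm
    · intro z hz
      cases z with
      | inl u =>
        rcases (adj_inl_inr u e i).mp hz.symm with ⟨-, rfl⟩ | ⟨-, rfl⟩
        · exact Or.inl rfl
        · exact Or.inr rfl
      | inr p =>
        obtain ⟨f, j⟩ := p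
        rcases (adj_inr_inr e f i j).mp hz with ⟨-, hj | hj⟩ <;>
          (exfalso; have := j.isLt; omega)
  · -- i = 0 < t
    refine deg_two_of _ _ (inl (ends e.1).1) (inr (e, ⟨i.val + 1, by omega⟩))
      (by simp) ?_ ?_ ?_
    · exact ((adj_inl_inr _ e i).mpr (Or.inl ⟨h0, rfl⟩)).symm
    · exact (adj_inr_inr e e i _).mpr ⟨rfl, Or.inl rfl⟩
    · intro z hz
      cases z with
      | inl u =>
        rcases (adj_inl_inr u e i).mp hz.symm with ⟨-, rfl⟩ | ⟨hit, -⟩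
        · exact Or.inl rfl
        · exact absurd hit (by omega)
      | inr p =>
        obtain ⟨f, j⟩ := p
        rcases (adj_inr_inr e f i j).mp hz with ⟨rfl, hj | hj⟩
        · exact Or.inr (by simp only [inr.injEq, Prod.mk.injEq, true_and]; exact Fin.ext (by simp only [Fin.val_mk]; omega))
        · exfalso; omega
  · -- 0 < i = t
    refine deg_two_of _ _ (inr (e, ⟨i.val - 1, by omega⟩)) (inl (ends e.1).2)
      (by simp) ?_ ?_ ?_
    · exact (adj_inr_inr e e i _).mpr ⟨rfl, Or.inr (by simp; omega)⟩
    · exact ((adj_inl_inr _ e i).mpr (Or.inr ⟨ht, rfl⟩)).symm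
    · intro z hz
      cases z with
      | inl u =>
        rcases (adj_inl_inr u e i).mp hz.symm with ⟨hit, -⟩ | ⟨-, rfl⟩
        · exact absurd hit h0
        · exact Or.inr rfl
      | inr p =>
        obtain ⟨f, j⟩ := p
        rcases (adj_inr_inr e f i j).mp hz with ⟨rfl, hj | hj⟩
        · exfalso; have := j.isLt; omega
        · exact Or.inl (by simp only [inr.injEq, Prod.mk.injEq, true_and]; exact Fin.ext (by simp only [Fin.val_mk]; omega))
  · -- 0 < i < t
    refine deg_two_of _ _ (inr (e, ⟨i.val - 1, by omega⟩)) (inr (e, ⟨i.val + 1, by omega⟩))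
      (by simp only [ne_eq, inr.injEq, Prod.mk.injEq, true_and, Fin.mk.injEq]; omega) ?_ ?_ ?_
    · exact (adj_inr_inr e e i _).mpr ⟨rfl, Or.inr (by simp; omega)⟩
    · exact (adj_inr_inr e e i _).mpr ⟨rfl, Or.inl rfl⟩
    · intro z hz
      cases z with
      | inl u =>
        rcases (adj_inl_inr u e i).mp hz.symm with ⟨hit, -⟩ | ⟨hit, -⟩
        · exact absurd hit h0
        · exact absurd hit ht
      | inr p =>
        obtain ⟨f, j⟩ := p
        rcases (adj_inr_inr e f i j).mp hz with ⟨rfl, hj | hj⟩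
        · exact Or.inr (by simp only [inr.injEq, Prod.mk.injEq, true_and]; exact Fin.ext (by simp only [Fin.val_mk]; omega))
        · exact Or.inl (by simp only [inr.injEq, Prod.mk.injEq, true_and]; exact Fin.ext (by simp only [Fin.val_mk]; omega))

end

/-- The `k`-th edge (k = 0, …, t+1) on the subdivided path replacing edge `e`. -/
noncomputable def F {V : Type*} (G : SimpleGraph V) (t : ℕ) (e : G.edgeSet) (k : ℕ) :
    Sym2 (V ⊕ (G.edgeSet × Fin (t+1))) :=
  if k = 0 then s(inl (ends e.1).1, inr (e, ⟨0, Nat.succ_pos t⟩))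
  else if k = t + 1 then s(inr (e, ⟨t, Nat.lt_succ_self t⟩), inl (ends e.1).2)
  else s(inr (e, ⟨(k-1) % (t+1), Nat.mod_lt _ (Nat.succ_pos t)⟩), inr (e, ⟨k % (t+1), Nat.mod_lt _ (Nat.succ_pos t)⟩))

section
variable {V : Type*} {G : SimpleGraph V} {t : ℕ}

lemma F_zero (e : G.edgeSet) :
    F G t e 0 = s(inl (ends e.1).1, inr (e, ⟨0, Nat.succ_pos t⟩)) := by
  unfold F; rw [if_pos rfl]

lemma F_last (e : G.edgeSet) :
    F G t e (t+1) = s(inr (e, ⟨t, Nat.lt_succ_self t⟩), inl (ends e.1).2) := by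
  unfold F; rw [if_neg (Nat.succ_ne_zero t), if_pos rfl]

lemma F_mid (e : G.edgeSet) {k : ℕ} (h1 : k ≠ 0) (h2 : k ≠ t+1) :
    F G t e k = s(inr (e, ⟨(k-1) % (t+1), Nat.mod_lt _ (Nat.succ_pos t)⟩), inr (e, ⟨k % (t+1), Nat.mod_lt _ (Nat.succ_pos t)⟩)) := by
  unfold F; rw [if_neg h1, if_neg h2]

end

section
variable {V : Type*} [Fintype V] {G : SimpleGraph V} {t : ℕ}

lemma edge_eq :
    (Subdiv G (t+1)).edgeFinset =
      ((univ : Finset G.edgeSet) ×ˢ Finset.range (t+2)).image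
        (fun p => F G t p.1 p.2) := by
  ext E
  rw [SimpleGraph.mem_edgeFinset, Finset.mem_image]
  induction E using Sym2.ind with
  | _ x y =>
    rw [SimpleGraph.mem_edgeSet]
    constructor
    · intro hadj
      match x, y with
      | inl u, inl v => exact absurd hadj (adj_inl_inl u v)
      | inl u, inr (e, i) =>
        rcases (adj_inl_inr u e i).mp hadj with ⟨hi, rfl⟩ | ⟨hi, rfl⟩
        · refine ⟨(e, 0), by simp, ?_⟩
          rw [F_zero e]
          have e1 : (⟨0, Nat.succ_pos t⟩ : Fin (t+1)) = i := by
            apply Fin.ext; simp only [Fin.val_mk]; omega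
          rw [e1]
        · refine ⟨(e, t+1), by simp [Finset.mem_range], ?_⟩
          rw [F_last e]
          have e1 : (⟨t, Nat.lt_succ_self t⟩ : Fin (t+1)) = i := by
            apply Fin.ext; simp only [Fin.val_mk]; omega
          rw [e1, Sym2.eq_swap]
      | inr (e, i), inl u =>
        rcases (adj_inl_inr u e i).mp hadj.symm with ⟨hi, rfl⟩ | ⟨hi, rfl⟩
        · refine ⟨(e, 0), by simp, ?_⟩
          rw [F_zero e]
          have e1 : (⟨0, Nat.succ_pos t⟩ : Fin (t+1)) = i := by
            apply Fin.ext; simp only [Fin.val_mk]; omega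
          rw [e1, Sym2.eq_swap]
        · refine ⟨(e, t+1), by simp [Finset.mem_range], ?_⟩
          rw [F_last e]
          have e1 : (⟨t, Nat.lt_succ_self t⟩ : Fin (t+1)) = i := by
            apply Fin.ext; simp only [Fin.val_mk]; omega
          rw [e1]
      | inr (e, i), inr (f, j) =>
        rcases (adj_inr_inr e f i j).mp hadj with ⟨rfl, hj | hj⟩
        · have hj2 : j.val ≤ t := by have := j.isLt; omega
          refine ⟨(e, j.val), by simp only [Finset.mem_product, Finset.mem_range,
            Finset.mem_univ, true_and]; omega, ?_⟩
          rw [F_mid e (by omega : j.val ≠ 0) (by omega : j.val ≠ t+1)]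
          have e1 : (⟨(j.val-1) % (t+1), Nat.mod_lt _ (Nat.succ_pos t)⟩ : Fin (t+1)) = i := by
            apply Fin.ext; simp only [Fin.val_mk]
            rw [Nat.mod_eq_of_lt (by omega)]; omega
          have e2 : (⟨j.val % (t+1), Nat.mod_lt _ (Nat.succ_pos t)⟩ : Fin (t+1)) = j := by
            apply Fin.ext; simp only [Fin.val_mk]
            rw [Nat.mod_eq_of_lt (by omega)]
          rw [e1, e2]
        · have hi2 : i.val ≤ t := by have := i.isLt; omega
          refine ⟨(e, i.val), by simp only [Finset.mem_product, Finset.mem_range,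
            Finset.mem_univ, true_and]; omega, ?_⟩
          rw [F_mid e (by omega : i.val ≠ 0) (by omega : i.val ≠ t+1)]
          have e1 : (⟨(i.val-1) % (t+1), Nat.mod_lt _ (Nat.succ_pos t)⟩ : Fin (t+1)) = j := by
            apply Fin.ext; simp only [Fin.val_mk]
            rw [Nat.mod_eq_of_lt (by omega)]; omega
          have e2 : (⟨i.val % (t+1), Nat.mod_lt _ (Nat.succ_pos t)⟩ : Fin (t+1)) = i := by
            apply Fin.ext; simp only [Fin.val_mk]
            rw [Nat.mod_eq_of_lt (by omega)]
          rw [e1, e2, Sym2.eq_swap]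
    · rintro ⟨⟨e, k⟩, hmem, hF⟩
      simp only [Finset.mem_product, Finset.mem_range, Finset.mem_univ, true_and] at hmem
      rw [← SimpleGraph.mem_edgeSet]
      rw [show (s(x, y)) = F G t e k from hF.symm]
      by_cases hk0 : k = 0
      · subst hk0
        rw [F_zero e]
        rw [SimpleGraph.mem_edgeSet]
        exact (adj_inl_inr _ e _).mpr (Or.inl ⟨rfl, rfl⟩)
      by_cases hkt : k = t+1
      · subst hkt
        rw [F_last e]
        rw [SimpleGraph.mem_edgeSet]
        exact ((adj_inl_inr _ e _).mpr (Or.inr ⟨rfl, rfl⟩)).symm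
      · rw [F_mid e hk0 hkt]
        rw [SimpleGraph.mem_edgeSet]
        refine (adj_inr_inr e e _ _).mpr ⟨rfl, Or.inl ?_⟩
        simp only [Fin.val_mk]
        rw [Nat.mod_eq_of_lt (by omega), Nat.mod_eq_of_lt (by omega)]
        omega

lemma F_injOn (e f : G.edgeSet) {k l : ℕ} (hk : k < t+2) (hl : l < t+2)
    (hF : F G t e k = F G t f l) : e = f ∧ k = l := by
  by_cases hk0 : k = 0 <;> by_cases hl0 : l = 0
  · subst hk0; subst hl0
    rw [F_zero, F_zero, Sym2.eq_iff] at hF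
    rcases hF with ⟨h1, h2⟩ | ⟨h1, h2⟩
    · simp only [inr.injEq, Prod.mk.injEq] at h2
      exact ⟨h2.1, rfl⟩
    · exact absurd h1 (by simp)
  · subst hk0
    by_cases hlt : l = t+1
    · subst hlt
      rw [F_zero, F_last, Sym2.eq_iff] at hF
      rcases hF with ⟨h1, h2⟩ | ⟨h1, h2⟩
      · exact absurd h1 (by simp)
      · simp only [inl.injEq] at h1
        simp only [inr.injEq, Prod.mk.injEq, Fin.mk.injEq] at h2
        exact absurd (h2.1 ▸ h1) (ends_ne e)
    · rw [F_zero, F_mid f hl0 hlt, Sym2.eq_iff] at hF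
      rcases hF with ⟨h1, -⟩ | ⟨h1, -⟩ <;> exact absurd h1 (by simp)
  · subst hl0
    by_cases hkt : k = t+1
    · subst hkt
      rw [F_last, F_zero, Sym2.eq_iff] at hF
      rcases hF with ⟨h1, h2⟩ | ⟨h1, h2⟩
      · exact absurd h1 (by simp)
      · simp only [inl.injEq] at h2
        simp only [inr.injEq, Prod.mk.injEq, Fin.mk.injEq] at h1
        exact absurd (h1.1 ▸ h2.symm) (ends_ne e)
    · rw [F_mid e hk0 hkt, F_zero, Sym2.eq_iff] at hF
      rcases hF with ⟨h1, -⟩ | ⟨-, h2⟩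
      · exact absurd h1 (by simp)
      · exact absurd h2 (by simp)
  · by_cases hkt : k = t+1 <;> by_cases hlt : l = t+1
    · subst hkt; subst hlt
      rw [F_last, F_last, Sym2.eq_iff] at hF
      rcases hF with ⟨h1, h2⟩ | ⟨h1, h2⟩
      · simp only [inr.injEq, Prod.mk.injEq] at h1
        exact ⟨h1.1, rfl⟩
      · exact absurd h1 (by simp)
    · subst hkt
      rw [F_last, F_mid f hl0 hlt, Sym2.eq_iff] at hF
      rcases hF with ⟨-, h2⟩ | ⟨-, h2⟩ <;> exact absurd h2 (by simp)
    · subst hlt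
      rw [F_mid e hk0 hkt, F_last, Sym2.eq_iff] at hF
      rcases hF with ⟨-, h2⟩ | ⟨h1, -⟩
      · exact absurd h2 (by simp)
      · exact absurd h1 (by simp)
    · rw [F_mid e hk0 hkt, F_mid f hl0 hlt, Sym2.eq_iff] at hF
      rcases hF with ⟨h1, h2⟩ | ⟨h1, h2⟩
      · simp only [inr.injEq, Prod.mk.injEq, Fin.mk.injEq] at h1 h2
        refine ⟨h1.1, ?_⟩
        have h2v := h2.2
        rw [Nat.mod_eq_of_lt (by omega), Nat.mod_eq_of_lt (by omega)] at h2v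
        omega
      · simp only [inr.injEq, Prod.mk.injEq, Fin.mk.injEq] at h1 h2
        have h1v := h1.2
        have h2v := h2.2
        rw [Nat.mod_eq_of_lt (by omega), Nat.mod_eq_of_lt (by omega)] at h1v
        rw [Nat.mod_eq_of_lt (by omega), Nat.mod_eq_of_lt (by omega)] at h2v
        omega

lemma F_injOn' : Set.InjOn (fun p : G.edgeSet × ℕ => F G t p.1 p.2)
    ((((univ : Finset G.edgeSet) ×ˢ Finset.range (t+2)) : Finset _) : Set _) := by
  rintro ⟨e, k⟩ hp ⟨f, l⟩ hq hpq
  simp only [Finset.coe_sort_coe, Finset.mem_coe, Finset.mem_product, Finset.mem_univ,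
    Finset.mem_range, true_and] at hp hq
  obtain ⟨rfl, rfl⟩ := F_injOn e f hp hq hpq
  rfl

lemma card_edgeSet_eq : Fintype.card G.edgeSet = m G := by
  rw [m, SimpleGraph.edgeFinset, Set.toFinset_card]

lemma m_sub : m (Subdiv G (t+1)) = (t+2) * m G := by
  rw [m, edge_eq, Finset.card_image_of_injOn F_injOn', Finset.card_product,
    Finset.card_univ, Finset.card_range, card_edgeSet_eq, Nat.mul_comm]

lemma sum_sub (g : Sym2 (V ⊕ (G.edgeSet × Fin (t+1))) → ℕ) :
    ∑ E ∈ (Subdiv G (t+1)).edgeFinset, g E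
      = ∑ e : G.edgeSet, ∑ k ∈ Finset.range (t+2), g (F G t e k) := by
  rw [edge_eq, Finset.sum_image (fun p hp q hq hpq => F_injOn' (Finset.mem_coe.mpr hp) (Finset.mem_coe.mpr hq) hpq),
    Finset.sum_product]

lemma sum_helper (A B : ℕ) :
    ∑ k ∈ Finset.range (t+2), (if k = 0 then A else if k = t+1 then B else 4)
      = A + B + 4 * t := by
  have h1 : Finset.range (t+2) = insert 0 (Finset.Ico 1 (t+2)) := by
    ext x; simp [Finset.mem_Ico, Finset.mem_range]; omega
  have h2 : Finset.Ico 1 (t+2) = insert (t+1) (Finset.Ico 1 (t+1)) := by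
    ext x; simp [Finset.mem_Ico]; omega
  rw [h1, Finset.sum_insert (by simp), h2, Finset.sum_insert (by simp)]
  rw [if_pos rfl, if_neg (Nat.succ_ne_zero t), if_pos rfl]
  have h3 : ∀ k ∈ Finset.Ico 1 (t+1),
      (if k = 0 then A else if k = t+1 then B else 4) = 4 := by
    intro k hk
    simp only [Finset.mem_Ico] at hk
    rw [if_neg (by omega), if_neg (by omega)]
  rw [Finset.sum_congr rfl h3, Finset.sum_const, Nat.Ico_eq_range', smul_eq_mul]
  simp
  omega

lemma sum_edges (f : Sym2 V → ℕ) :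
    ∑ e : G.edgeSet, f e.1 = ∑ E ∈ G.edgeFinset, f E := by
  rw [SimpleGraph.edgeFinset]
  exact Finset.sum_set_coe (f := f) (s := G.edgeSet)

lemma lift_ends_add (e : G.edgeSet) :
    Sym2.lift ⟨fun u v => G.degree u + G.degree v, fun _ _ => Nat.add_comm _ _⟩ e.1
      = G.degree (ends e.1).1 + G.degree (ends e.1).2 := by
  conv_lhs => rw [← ends_spec e.1]
  exact Sym2.lift_mk _ _ _

lemma ds_sub : ds (Subdiv G (t+1)) = ds G + 4 * ((t+1) * m G) := by
  rw [ds, sum_sub]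
  have inner : ∀ e : G.edgeSet,
      (∑ k ∈ Finset.range (t+2), Sym2.lift
        ⟨fun u v => (Subdiv G (t+1)).degree u + (Subdiv G (t+1)).degree v,
          fun _ _ => Nat.add_comm _ _⟩ (F G t e k))
        = Sym2.lift ⟨fun u v => G.degree u + G.degree v,
            fun _ _ => Nat.add_comm _ _⟩ e.1 + 4 * (t+1) := by
    intro e
    have hcong : ∀ k ∈ Finset.range (t+2), Sym2.lift
        ⟨fun u v => (Subdiv G (t+1)).degree u + (Subdiv G (t+1)).degree v,
          fun _ _ => Nat.add_comm _ _⟩ (F G t e k) =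
        (if k = 0 then G.degree (ends e.1).1 + 2
          else if k = t+1 then G.degree (ends e.1).2 + 2 else 4) := by
      intro k hk
      by_cases hk0 : k = 0
      · subst hk0
        rw [F_zero, if_pos rfl, Sym2.lift_mk]
        dsimp only
        rw [deg_inl, deg_inr]
      by_cases hkt : k = t+1
      · subst hkt
        rw [F_last, if_neg hk0, if_pos rfl, Sym2.lift_mk]
        dsimp only
        rw [deg_inl, deg_inr, Nat.add_comm]
      · rw [F_mid e hk0 hkt, if_neg hk0, if_neg hkt, Sym2.lift_mk]
        dsimp only
        rw [deg_inr, deg_inr]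
    rw [Finset.sum_congr rfl hcong, sum_helper, lift_ends_add]
    omega
  rw [Finset.sum_congr rfl (fun e _ => inner e), Finset.sum_add_distrib,
    Finset.sum_const, Finset.card_univ, card_edgeSet_eq, smul_eq_mul,
    sum_edges, ← ds]
  ring

lemma dd_sub : dd (Subdiv G (t+1)) = 2 * ds G + 4 * (t * m G) := by
  rw [dd, sum_sub]
  have inner : ∀ e : G.edgeSet,
      (∑ k ∈ Finset.range (t+2), Sym2.lift
        ⟨fun u v => (Subdiv G (t+1)).degree u * (Subdiv G (t+1)).degree v,
          fun _ _ => Nat.mul_comm _ _⟩ (F G t e k))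
        = 2 * Sym2.lift ⟨fun u v => G.degree u + G.degree v,
            fun _ _ => Nat.add_comm _ _⟩ e.1 + 4 * t := by
    intro e
    have hcong : ∀ k ∈ Finset.range (t+2), Sym2.lift
        ⟨fun u v => (Subdiv G (t+1)).degree u * (Subdiv G (t+1)).degree v,
          fun _ _ => Nat.mul_comm _ _⟩ (F G t e k) =
        (if k = 0 then G.degree (ends e.1).1 * 2
          else if k = t+1 then G.degree (ends e.1).2 * 2 else 4) := by
      intro k hk
      by_cases hk0 : k = 0
      · subst hk0
        rw [F_zero, if_pos rfl, Sym2.lift_mk]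
        dsimp only
        rw [deg_inl, deg_inr]
      by_cases hkt : k = t+1
      · subst hkt
        rw [F_last, if_neg hk0, if_pos rfl, Sym2.lift_mk]
        dsimp only
        rw [deg_inl, deg_inr, Nat.mul_comm]
      · rw [F_mid e hk0 hkt, if_neg hk0, if_neg hkt, Sym2.lift_mk]
        dsimp only
        rw [deg_inr, deg_inr]
    rw [Finset.sum_congr rfl hcong, sum_helper, lift_ends_add]
    ring
  rw [Finset.sum_congr rfl (fun e _ => inner e), Finset.sum_add_distrib,
    Finset.sum_const, Finset.card_univ, card_edgeSet_eq, smul_eq_mul,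
    ← Finset.mul_sum, sum_edges, ← ds]
  ring

end

theorem stmt_4' {V : Type*} [Fintype V] (T : SimpleGraph V)
    (h : ds T = 4 * m T) (s : ℕ) (hs : 1 ≤ s) :
    4 * m (Subdiv T s) * dd (Subdiv T s) = (ds (Subdiv T s)) ^ 2 := by
  obtain ⟨t, rfl⟩ : ∃ t, s = t + 1 := ⟨s - 1, by omega⟩
  rw [m_sub, ds_sub, dd_sub, h]
  ring

end Neutral

/-- if a tree `T` satisfies `∑_{uv∈E}(d_u+d_v) = 4|E|`, then every
`s`-th subdivision `T_s` (`s ≥ 1`) has zero assortativity coefficient, i.e.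
`4|E_s|·∑ d_i d_j = (∑(d_i+d_j))²`. -/
theorem stmt_4 {V : Type*} [Fintype V] (T : SimpleGraph V)
    (htree : T.IsTree) (h : ds T = 4 * m T) (s : ℕ) (hs : 1 ≤ s) :
    4 * m (Subdiv T s) * dd (Subdiv T s) = (ds (Subdiv T s)) ^ 2 :=
  Neutral.stmt_4' T h s hs
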